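/- Fix an integer k ≥ 2. Then R_n^{(k,∅,0,0)}(x) = n! for all n ≤ k, and for every n > k, R_n^{(k,∅,0,0)}(x) = k! · (x+k)(x+k+1)⋯(x+n−1). -/

import Mathlib

/-- Number of points in quadrant I relative to `(i, σ i)`. -/
def quad1 {n : ℕ} (σ : Equiv.Perm (Fin n)) (i : Fin n) : ℕ :=
  (Finset.univ.filter (fun j => i < j ∧ σ i < σ j)).card

/-- Number of points in quadrant II relative to `(i, σ i)`. -/
def quad2 {n : ℕ} (σ : Equiv.Perm (Fin n)) (i : Fin n) : ℕ :=
  (Finset.univ.filter (fun j => j < i ∧ σ i < σ j)).card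

/-- `mmp^{(k,∅,0,0)}(σ)`: the number of indices `i` with at least `k` points
in quadrant I and exactly 0 points in quadrant II relative to `(i, σ i)`. -/
def mmpKE {n : ℕ} (k : ℕ) (σ : Equiv.Perm (Fin n)) : ℕ :=
  (Finset.univ.filter (fun i => k ≤ quad1 σ i ∧ quad2 σ i = 0)).card

/-- `R_n^{(k,∅,0,0)}(x) = Σ_{σ ∈ S_n} x^{mmp^{(k,∅,0,0)}(σ)}`. -/
noncomputable def R (k n : ℕ) : Polynomial ℤ :=
  ∑ σ : Equiv.Perm (Fin n), Polynomial.X ^ mmpKE k σ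

/-- Insert the smallest value `0` at position `p`, shifting everything else. -/
def ins {n : ℕ} (p : Fin (n + 1)) (τ : Equiv.Perm (Fin n)) : Equiv.Perm (Fin (n + 1)) :=
  (finSuccEquiv' p).trans ((Equiv.optionCongr τ).trans (finSuccEquiv' 0).symm)

lemma ins_self {n : ℕ} (p : Fin (n + 1)) (τ : Equiv.Perm (Fin n)) : ins p τ p = 0 := by
  simp [ins, finSuccEquiv'_at, finSuccEquiv'_symm_none]

lemma ins_succAbove {n : ℕ} (p : Fin (n + 1)) (τ : Equiv.Perm (Fin n)) (i : Fin n) :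
    ins p τ (p.succAbove i) = (τ i).succ := by
  simp [ins, finSuccEquiv'_succAbove, finSuccEquiv'_symm_some]

lemma ins_eq_zero_iff {n : ℕ} (p : Fin (n + 1)) (τ : Equiv.Perm (Fin n)) (j : Fin (n + 1)) :
    ins p τ j = 0 ↔ j = p :=
  ⟨fun h => (ins p τ).injective (h.trans (ins_self p τ).symm), fun h => h ▸ ins_self p τ⟩

lemma quad1_ins {n : ℕ} (p : Fin (n + 1)) (τ : Equiv.Perm (Fin n)) (a : Fin n) :
    quad1 (ins p τ) (p.succAbove a) = quad1 τ a := by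
  unfold quad1
  have : (Finset.univ.filter
      (fun j => p.succAbove a < j ∧ ins p τ (p.succAbove a) < ins p τ j))
      = (Finset.univ.filter (fun j => a < j ∧ τ a < τ j)).map (p.succAboveEmb) := by
    ext j
    simp only [Finset.mem_filter, Finset.mem_univ, true_and, Finset.mem_map,
      Fin.succAboveEmb_apply]
    constructor
    · rintro ⟨h1, h2⟩
      have hjp : j ≠ p := by
        rintro rfl
        rw [ins_self] at h2
        exact (Fin.not_lt_zero _) h2
      obtain ⟨b, rfl⟩ := Fin.exists_succAbove_eq hjp
      refine ⟨b, ⟨Fin.succAbove_lt_succAbove_iff.mp h1, ?_⟩, rfl⟩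
      rw [ins_succAbove, ins_succAbove, Fin.succ_lt_succ_iff] at h2
      exact h2
    · rintro ⟨b, ⟨h1, h2⟩, rfl⟩
      exact ⟨Fin.succAbove_lt_succAbove_iff.mpr h1, by
        rw [ins_succAbove, ins_succAbove, Fin.succ_lt_succ_iff]; exact h2⟩
  rw [this, Finset.card_map]

lemma quad2_ins {n : ℕ} (p : Fin (n + 1)) (τ : Equiv.Perm (Fin n)) (a : Fin n) :
    quad2 (ins p τ) (p.succAbove a) = quad2 τ a := by
  unfold quad2
  have : (Finset.univ.filter
      (fun j => j < p.succAbove a ∧ ins p τ (p.succAbove a) < ins p τ j))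
      = (Finset.univ.filter (fun j => j < a ∧ τ a < τ j)).map (p.succAboveEmb) := by
    ext j
    simp only [Finset.mem_filter, Finset.mem_univ, true_and, Finset.mem_map,
      Fin.succAboveEmb_apply]
    constructor
    · rintro ⟨h1, h2⟩
      have hjp : j ≠ p := by
        rintro rfl
        rw [ins_self] at h2
        exact (Fin.not_lt_zero _) h2
      obtain ⟨b, rfl⟩ := Fin.exists_succAbove_eq hjp
      refine ⟨b, ⟨Fin.succAbove_lt_succAbove_iff.mp h1, ?_⟩, rfl⟩
      rw [ins_succAbove, ins_succAbove, Fin.succ_lt_succ_iff] at h2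
      exact h2
    · rintro ⟨b, ⟨h1, h2⟩, rfl⟩
      exact ⟨Fin.succAbove_lt_succAbove_iff.mpr h1, by
        rw [ins_succAbove, ins_succAbove, Fin.succ_lt_succ_iff]; exact h2⟩
  rw [this, Finset.card_map]

lemma quad2_ins_self {n : ℕ} (p : Fin (n + 1)) (τ : Equiv.Perm (Fin n)) :
    quad2 (ins p τ) p = 0 ↔ p = 0 := by
  constructor
  · intro h
    by_contra hp
    have h0 : (0 : Fin (n + 1)) ∈
        Finset.univ.filter (fun j => j < p ∧ ins p τ p < ins p τ j) := by
      refine Finset.mem_filter.mpr ⟨Finset.mem_univ _, ?_, ?_⟩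
      · exact Fin.pos_iff_ne_zero.mpr hp
      · rw [ins_self]
        exact Fin.pos_iff_ne_zero.mpr (by
          rw [Ne, ins_eq_zero_iff]; exact fun h' => hp h'.symm)
    have := Finset.card_eq_zero.mp h
    rw [this] at h0
    exact absurd h0 (Finset.notMem_empty _)
  · rintro rfl
    unfold quad2
    rw [Finset.card_eq_zero, Finset.filter_eq_empty_iff]
    rintro j - ⟨h1, -⟩
    exact (Fin.not_lt_zero _) h1

lemma quad1_ins_zero {n : ℕ} (τ : Equiv.Perm (Fin n)) :
    quad1 (ins 0 τ) 0 = n := by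
  unfold quad1
  have : (Finset.univ.filter (fun j => (0 : Fin (n + 1)) < j ∧ ins 0 τ 0 < ins 0 τ j))
      = Finset.univ.erase 0 := by
    ext j
    simp only [Finset.mem_filter, Finset.mem_univ, true_and, Finset.mem_erase, and_true]
    rw [ins_self]
    constructor
    · rintro ⟨h1, -⟩
      exact Fin.pos_iff_ne_zero.mp h1
    · intro h
      refine ⟨Fin.pos_iff_ne_zero.mpr h, Fin.pos_iff_ne_zero.mpr ?_⟩
      rw [Ne, ins_eq_zero_iff]
      exact h
  rw [this, Finset.card_erase_of_mem (Finset.mem_univ _), Finset.card_univ, Fintype.card_fin]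
  rfl

lemma mmpKE_ins {n : ℕ} (k : ℕ) (p : Fin (n + 1)) (τ : Equiv.Perm (Fin n)) :
    mmpKE k (ins p τ) = mmpKE k τ + (if p = 0 ∧ k ≤ n then 1 else 0) := by
  classical
  unfold mmpKE
  have hcard : ((Finset.univ.map p.succAboveEmb).filter
      (fun i => k ≤ quad1 (ins p τ) i ∧ quad2 (ins p τ) i = 0)).card
      = (Finset.univ.filter (fun i => k ≤ quad1 τ i ∧ quad2 τ i = 0)).card := by
    rw [Finset.filter_map, Finset.card_map]
    congr 1
    refine Finset.filter_congr fun a _ => ?_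
    simp only [Function.comp_apply, Fin.succAboveEmb_apply, quad1_ins, quad2_ins]
  have hMp : (k ≤ quad1 (ins p τ) p ∧ quad2 (ins p τ) p = 0) ↔ (p = 0 ∧ k ≤ n) := by
    constructor
    · rintro ⟨h1, h2⟩
      have hp0 : p = 0 := (quad2_ins_self p τ).mp h2
      subst hp0
      rw [quad1_ins_zero] at h1
      exact ⟨rfl, h1⟩
    · rintro ⟨rfl, hkn⟩
      refine ⟨by rw [quad1_ins_zero]; exact hkn, (quad2_ins_self 0 τ).mpr rfl⟩
  rw [Fin.univ_succAbove n p]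
  by_cases hc : p = 0 ∧ k ≤ n
  · rw [Finset.filter_cons, if_pos (hMp.mpr hc), if_pos hc, Finset.card_cons, hcard, add_comm]
  · rw [Finset.filter_cons, if_neg (fun h => hc (hMp.mp h)), if_neg hc, hcard, add_zero]

lemma ins_bijective {n : ℕ} :
    Function.Bijective (fun pt : Fin (n + 1) × Equiv.Perm (Fin n) => ins pt.1 pt.2) := by
  rw [Fintype.bijective_iff_injective_and_card]
  constructor
  · rintro ⟨p, τ⟩ ⟨q, ρ⟩ h
    simp only at h
    have hpq : p = q := by
      apply (ins p τ).injective
      rw [ins_self, h, ins_self]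
    subst hpq
    have hτρ : τ = ρ := by
      ext i
      have h2 := congrArg (fun σ : Equiv.Perm (Fin (n + 1)) => σ (p.succAbove i)) h
      simp only [ins_succAbove] at h2
      have h3 : τ i = ρ i := Fin.succ_injective _ h2
      rw [h3]
    rw [hτρ]
  · simp [Fintype.card_perm, Nat.factorial_succ]

lemma mmpKE_eq_zero {n k : ℕ} (h : n ≤ k) (σ : Equiv.Perm (Fin n)) : mmpKE k σ = 0 := by
  unfold mmpKE
  rw [Finset.card_eq_zero, Finset.filter_eq_empty_iff]
  rintro i - ⟨h1, -⟩
  have hsub : Finset.univ.filter (fun j => i < j ∧ σ i < σ j) ⊆ Finset.univ.erase i := by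
    intro j hj
    rw [Finset.mem_filter] at hj
    exact Finset.mem_erase.mpr ⟨fun hji => by subst hji; exact lt_irrefl _ hj.2.1,
      Finset.mem_univ _⟩
  have hle : quad1 σ i ≤ n - 1 := by
    have := Finset.card_le_card hsub
    rwa [Finset.card_erase_of_mem (Finset.mem_univ _), Finset.card_univ, Fintype.card_fin]
      at this
  have hn : 0 < n := i.pos
  omega

lemma R_small {k n : ℕ} (h : n ≤ k) : R k n = (Nat.factorial n : Polynomial ℤ) := by
  unfold R
  have : ∀ σ : Equiv.Perm (Fin n), (Polynomial.X : Polynomial ℤ) ^ mmpKE k σ = 1 := by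
    intro σ; rw [mmpKE_eq_zero h, pow_zero]
  rw [Finset.sum_congr rfl (fun σ _ => this σ), Finset.sum_const, Finset.card_univ,
    Fintype.card_perm, Fintype.card_fin, nsmul_eq_mul, mul_one]

lemma R_rec (k n : ℕ) (h : k ≤ n) :
    R k (n + 1) = (Polynomial.X + (n : Polynomial ℤ)) * R k n := by
  unfold R
  rw [← Function.Bijective.sum_comp (ins_bijective (n := n))
    (fun σ => (Polynomial.X : Polynomial ℤ) ^ mmpKE k σ), Fintype.sum_prod_type]
  have : ∀ p : Fin (n + 1), ∀ τ : Equiv.Perm (Fin n),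
      (Polynomial.X : Polynomial ℤ) ^ mmpKE k (ins p τ)
        = Polynomial.X ^ (if p = 0 then 1 else 0) * Polynomial.X ^ mmpKE k τ := by
    intro p τ
    rw [mmpKE_ins, pow_add, mul_comm]
    congr 2
    simp [h]
  calc ∑ p : Fin (n + 1), ∑ τ : Equiv.Perm (Fin n),
        (Polynomial.X : Polynomial ℤ) ^ mmpKE k (ins p τ)
      = ∑ p : Fin (n + 1), (Polynomial.X : Polynomial ℤ) ^ (if p = 0 then 1 else 0) *
          ∑ τ : Equiv.Perm (Fin n), (Polynomial.X : Polynomial ℤ) ^ mmpKE k τ := by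
        refine Finset.sum_congr rfl fun p _ => ?_
        rw [Finset.mul_sum]
        exact Finset.sum_congr rfl fun τ _ => this p τ
    _ = (Polynomial.X + (n : Polynomial ℤ)) *
          ∑ τ : Equiv.Perm (Fin n), (Polynomial.X : Polynomial ℤ) ^ mmpKE k τ := by
        rw [← Finset.sum_mul]
        congr 1
        rw [Fin.sum_univ_succ]
        simp [Fin.succ_ne_zero]

theorem stmt_6 (k : ℕ) (hk : 2 ≤ k) :
    (∀ n, n ≤ k → R k n = (Nat.factorial n : Polynomial ℤ)) ∧
    (∀ n, k < n → R k n =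
      (Nat.factorial k : Polynomial ℤ) *
        ∏ i ∈ Finset.Icc k (n - 1), (Polynomial.X + (i : Polynomial ℤ))) := by
  refine ⟨fun n h => R_small h, ?_⟩
  have key : ∀ m : ℕ, R k (k + m + 1) =
      (Nat.factorial k : Polynomial ℤ) *
        ∏ i ∈ Finset.Icc k (k + m), (Polynomial.X + (i : Polynomial ℤ)) := by
    intro m
    induction m with
    | zero =>
      simp only [Nat.add_zero]
      rw [R_rec k k le_rfl, R_small le_rfl, Finset.Icc_self,
        Finset.prod_singleton, mul_comm]
    | succ m ih =>
      have h1 : k + (m + 1) + 1 = (k + m + 1) + 1 := by ring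
      rw [h1, R_rec k (k + m + 1) (by omega), ih,
        show k + (m + 1) = k + m + 1 by omega,
        Finset.prod_Icc_succ_top (by omega : k ≤ k + m + 1)]
      push_cast
      ring
  intro n hn
  obtain ⟨m, rfl⟩ : ∃ m, n = k + m + 1 := ⟨n - k - 1, by omega⟩
  have : k + m + 1 - 1 = k + m := by omega
  rw [this]
  exact key m
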